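/- With notation as above, $\sum_m \dim V_{\mathbf{t},\mathrm{prim}}^{(m)} q^m = \tau_{< |\mathbf{t}|/2 - l + 1}\left( (1-q) \prod_{i=1}^l \frac{q^{t_i - 1} - 1}{q - 1} \right)$, where $\tau_{<c}$ truncates a polynomial to the terms of degree strictly less than $c$. -/

import Mathlib

open Finsupp

variable {l : ℕ}

/-- Tuples `(m₁,…,m_l)` with `0 ≤ mᵢ ≤ tᵢ - 2` (encoded as `mᵢ : Fin (tᵢ - 1)`). -/
abbrev Tup (t : Fin l → ℕ) := ∀ i : Fin l, Fin (t i - 1)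

/-- The free `ℚ`-vector space on all tuples; its graded piece `V_𝐭^(m)` is `TupSpan t m`. -/
abbrev TupMod (t : Fin l → ℕ) := Tup t →₀ ℚ

/-- Decrease the `i`-th coordinate of a tuple by one. -/
def dec (t : Fin l → ℕ) (f : Tup t) (i : Fin l) : Tup t :=
  Function.update f i ⟨(f i : ℕ) - 1, by have := (f i).isLt; omega⟩

/-- The lowering operator `∂`, sending a basis tuple to the sum of all tuples obtained by
decreasing one positive coordinate by one. -/
noncomputable def lower (t : Fin l → ℕ) : TupMod t →ₗ[ℚ] TupMod t :=
  Finsupp.lsum ℚ fun f =>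
    LinearMap.toSpanSingleton ℚ (TupMod t)
      (∑ i ∈ Finset.univ.filter (fun i => (f i : ℕ) ≠ 0), Finsupp.single (dec t f i) 1)

/-- The graded piece `V_𝐭^(m)`: the span of the basis tuples with coordinate sum `m`. -/
noncomputable def TupSpan (t : Fin l → ℕ) (m : ℕ) : Submodule ℚ (TupMod t) :=
  Submodule.span ℚ {x | ∃ f : Tup t, (∑ i, (f i : ℕ)) = m ∧ x = Finsupp.single f 1}

section Chunk1
namespace Aux


noncomputable section

def inc (t : Fin l → ℕ) (f : Tup t) (i : Fin l) : Tup t :=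
  Function.update f i ⟨min ((f i : ℕ) + 1) (t i - 2), by have := (f i).isLt; omega⟩

def wcoef (t : Fin l → ℕ) (f : Tup t) (i : Fin l) : ℚ :=
  ((((f i : ℕ) + 1) * (t i - 2 - (f i : ℕ)) : ℕ) : ℚ)

def raise (t : Fin l → ℕ) : TupMod t →ₗ[ℚ] TupMod t :=
  Finsupp.lsum ℚ fun f =>
    LinearMap.toSpanSingleton ℚ (TupMod t)
      (∑ i, Finsupp.single (inc t f i) (wcoef t f i))

def raise' (t : Fin l → ℕ) : TupMod t →ₗ[ℚ] TupMod t :=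
  Finsupp.lsum ℚ fun f =>
    LinearMap.toSpanSingleton ℚ (TupMod t)
      (∑ i ∈ Finset.univ.filter (fun i => (f i : ℕ) < t i - 2), Finsupp.single (inc t f i) 1)

def wt (t : Fin l → ℕ) (f : Tup t) : ℚ :=
  ∑ i, ((2 * (f i : ℕ) : ℚ) - ((t i - 2 : ℕ) : ℚ))

variable {t : Fin l → ℕ}

lemma lower_single (f : Tup t) :
    lower t (single f 1) =
      ∑ i ∈ Finset.univ.filter (fun i => (f i : ℕ) ≠ 0), single (dec t f i) 1 := by
  simp [lower, Finsupp.lsum_single, LinearMap.toSpanSingleton_apply]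

lemma raise_single (f : Tup t) :
    raise t (single f 1) = ∑ i, single (inc t f i) (wcoef t f i) := by
  simp [raise, Finsupp.lsum_single, LinearMap.toSpanSingleton_apply]

lemma raise'_single (f : Tup t) :
    raise' t (single f 1) =
      ∑ i ∈ Finset.univ.filter (fun i => (f i : ℕ) < t i - 2), single (inc t f i) 1 := by
  simp [raise', Finsupp.lsum_single, LinearMap.toSpanSingleton_apply]

lemma single_mem_tupSpan {f : Tup t} {m : ℕ} (h : (∑ i, (f i : ℕ)) = m) :
    single f (1:ℚ) ∈ TupSpan t m :=
  Submodule.subset_span ⟨f, h, rfl⟩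

lemma single_mem_tupSpan' {f : Tup t} {m : ℕ} (h : (∑ i, (f i : ℕ)) = m) (c : ℚ) :
    single f c ∈ TupSpan t m := by
  have := (TupSpan t m).smul_mem c (single_mem_tupSpan h)
  simpa using this

lemma sum_dec {f : Tup t} {i : Fin l} (hi : (f i : ℕ) ≠ 0) :
    (∑ j, ((dec t f i j : ℕ))) = (∑ j, (f j : ℕ)) - 1 := by
  classical
  have h1 : (∑ j, ((dec t f i j : ℕ))) = ((f i : ℕ) - 1) + ∑ j ∈ Finset.univ.erase i, (f j : ℕ) := by
    rw [show (fun j => ((dec t f i j : ℕ))) = fun j => (Function.update f i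
      ⟨(f i : ℕ) - 1, by have := (f i).isLt; omega⟩ j : ℕ) from rfl]
    rw [← Finset.add_sum_erase _ _ (Finset.mem_univ i)]
    simp only [Function.update_self]
    congr 1
    exact Finset.sum_congr rfl fun j hj => by
      rw [Function.update_of_ne (Finset.ne_of_mem_erase hj)]
  have h2 : (∑ j, (f j : ℕ)) = (f i : ℕ) + ∑ j ∈ Finset.univ.erase i, (f j : ℕ) :=
    (Finset.add_sum_erase _ _ (Finset.mem_univ i)).symm
  omega

lemma sum_inc {f : Tup t} {i : Fin l} (hi : (f i : ℕ) < t i - 2) :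
    (∑ j, ((inc t f i j : ℕ))) = (∑ j, (f j : ℕ)) + 1 := by
  classical
  have h1 : (∑ j, ((inc t f i j : ℕ))) = min ((f i : ℕ) + 1) (t i - 2)
      + ∑ j ∈ Finset.univ.erase i, (f j : ℕ) := by
    rw [show (fun j => ((inc t f i j : ℕ))) = fun j => (Function.update f i
      ⟨min ((f i : ℕ) + 1) (t i - 2), by have := (f i).isLt; omega⟩ j : ℕ) from rfl]
    rw [← Finset.add_sum_erase _ _ (Finset.mem_univ i)]
    simp only [Function.update_self]
    congr 1
    exact Finset.sum_congr rfl fun j hj => by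
      rw [Function.update_of_ne (Finset.ne_of_mem_erase hj)]
  have h2 : (∑ j, (f j : ℕ)) = (f i : ℕ) + ∑ j ∈ Finset.univ.erase i, (f j : ℕ) :=
    (Finset.add_sum_erase _ _ (Finset.mem_univ i)).symm
  omega

lemma map_tupSpan {L : TupMod t →ₗ[ℚ] TupMod t} {m k : ℕ}
    (h : ∀ f : Tup t, (∑ i, (f i : ℕ)) = m → L (single f 1) ∈ TupSpan t k) :
    ∀ x ∈ TupSpan t m, L x ∈ TupSpan t k := by
  intro x hx
  induction hx using Submodule.span_induction with
  | mem x hx => obtain ⟨f, hf, rfl⟩ := hx; exact h f hf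
  | zero => simp
  | add x y _ _ hx hy => rw [map_add]; exact add_mem hx hy
  | smul c x _ hx => rw [map_smul]; exact Submodule.smul_mem _ _ hx

lemma lower_tupSpan {m : ℕ} : ∀ x ∈ TupSpan t m, lower t x ∈ TupSpan t (m - 1) := by
  apply map_tupSpan
  intro f hf
  rw [lower_single]
  exact Submodule.sum_mem _ fun i hi => by
    rw [Finset.mem_filter] at hi
    exact single_mem_tupSpan (by rw [sum_dec hi.2, hf])

lemma raise_tupSpan {m : ℕ} : ∀ x ∈ TupSpan t m, raise t x ∈ TupSpan t (m + 1) := by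
  apply map_tupSpan
  intro f hf
  rw [raise_single]
  refine Submodule.sum_mem _ fun i _ => ?_
  by_cases hc : (f i : ℕ) < t i - 2
  · exact single_mem_tupSpan' (by rw [sum_inc hc, hf]) _
  · have h0 : t i - 2 - (f i : ℕ) = 0 := by omega
    have : wcoef t f i = 0 := by simp [wcoef, h0]
    rw [this, single_zero]
    exact Submodule.zero_mem _

lemma raise'_tupSpan {m : ℕ} : ∀ x ∈ TupSpan t m, raise' t x ∈ TupSpan t (m + 1) := by
  apply map_tupSpan
  intro f hf
  rw [raise'_single]
  exact Submodule.sum_mem _ fun i hi => by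
    rw [Finset.mem_filter] at hi
    exact single_mem_tupSpan (by rw [sum_inc hi.2, hf])

end
end Aux
end Chunk1
section Chunk2
namespace Aux
noncomputable section
variable {t : Fin l → ℕ}

lemma dec_apply_ne {g : Tup t} {i j : Fin l} (h : j ≠ i) : dec t g i j = g j :=
  Function.update_of_ne h _ _

lemma inc_apply_ne {g : Tup t} {i j : Fin l} (h : j ≠ i) : inc t g i j = g j :=
  Function.update_of_ne h _ _

lemma dec_apply_self {g : Tup t} {i : Fin l} : (dec t g i i : ℕ) = (g i : ℕ) - 1 := by
  simp [dec]

lemma inc_apply_self {g : Tup t} {i : Fin l} :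
    (inc t g i i : ℕ) = min ((g i : ℕ) + 1) (t i - 2) := by
  simp [inc]

lemma inc_dec_self {g : Tup t} {i : Fin l} (h : (g i : ℕ) ≠ 0) :
    inc t (dec t g i) i = g := by
  funext k
  by_cases hk : k = i
  · subst hk
    apply Fin.ext
    rw [inc_apply_self, dec_apply_self]
    have := (g k).isLt
    omega
  · rw [inc_apply_ne hk, dec_apply_ne hk]

lemma dec_inc_self {g : Tup t} {i : Fin l} (h : (g i : ℕ) < t i - 2) :
    dec t (inc t g i) i = g := by
  funext k
  by_cases hk : k = i
  · subst hk
    apply Fin.ext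
    rw [dec_apply_self, inc_apply_self]
    omega
  · rw [dec_apply_ne hk, inc_apply_ne hk]

lemma inc_dec_comm {g : Tup t} {i j : Fin l} (hij : i ≠ j) :
    inc t (dec t g j) i = dec t (inc t g i) j := by
  funext k
  by_cases hki : k = i
  · subst hki
    apply Fin.ext
    rw [inc_apply_self, dec_apply_ne hij, dec_apply_ne hij, inc_apply_self]
  · by_cases hkj : k = j
    · subst hkj
      apply Fin.ext
      rw [dec_apply_self, inc_apply_ne hij.symm, inc_apply_ne hij.symm, dec_apply_self]
    · rw [inc_apply_ne hki, dec_apply_ne hkj, dec_apply_ne hkj, inc_apply_ne hki]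

end
end Aux
end Chunk2
section Chunk3
namespace Aux
noncomputable section
variable {t : Fin l → ℕ}

lemma scalar_id (n k : ℕ) (h : k + 2 ≤ n) :
    ((k * (n - 1 - k) : ℕ) : ℚ) - (((k + 1) * (n - 2 - k) : ℕ) : ℚ)
      = 2 * (k : ℚ) - ((n - 2 : ℕ) : ℚ) := by
  obtain ⟨m, rfl⟩ : ∃ m, n = k + 2 + m := ⟨n - (k + 2), by omega⟩
  have h1 : k + 2 + m - 1 - k = m + 1 := by omega
  have h2 : k + 2 + m - 2 - k = m := by omega
  have h3 : k + 2 + m - 2 = k + m := by omega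
  rw [h1, h2, h3]
  push_cast
  ring

lemma lower_single' (h : Tup t) (c : ℚ) :
    lower t (single h c) = ∑ i, (if (h i : ℕ) ≠ 0 then single (dec t h i) c else 0) := by
  rw [show (single h c : TupMod t) = c • single h 1 by simp, map_smul, lower_single,
    Finset.smul_sum, Finset.sum_filter]
  exact Finset.sum_congr rfl fun i _ => by split <;> simp

lemma commutator (g : Tup t) :
    raise t (lower t (single g 1)) - lower t (raise t (single g 1)) = wt t g • single g 1 := by
  classical
  set T1 : Fin l → Fin l → TupMod t := fun i j =>
    if (g i : ℕ) ≠ 0 then single (inc t (dec t g i) j) (wcoef t (dec t g i) j) else 0 with hT1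
  set T2 : Fin l → Fin l → TupMod t := fun i j =>
    if ((inc t g j) i : ℕ) ≠ 0 then single (dec t (inc t g j) i) (wcoef t g j) else 0 with hT2
  have expand1 : raise t (lower t (single g 1)) = ∑ i, ∑ j, T1 i j := by
    rw [lower_single, Finset.sum_filter, map_sum]
    refine Finset.sum_congr rfl fun i _ => ?_
    rw [apply_ite (raise t), map_zero, raise_single]
    by_cases h : (g i : ℕ) ≠ 0
    · simp [hT1, h]
    · have h0 : (g i : ℕ) = 0 := by simpa using h
      simp [hT1, h0]
  have expand2 : lower t (raise t (single g 1)) = ∑ i, ∑ j, T2 i j := by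
    rw [raise_single, map_sum, Finset.sum_comm]
    refine Finset.sum_congr rfl fun j _ => ?_
    rw [lower_single']
  rw [expand1, expand2, ← Finset.sum_sub_distrib]
  have key : ∀ i, (∑ j, T1 i j) - (∑ j, T2 i j) = T1 i i - T2 i i := by
    intro i
    rw [← Finset.sum_sub_distrib]
    refine Finset.sum_eq_single i (fun j _ hj => ?_) (by simp)
    have hji : j ≠ i := hj
    have e1 : T1 i j = T2 i j := by
      simp only [hT1, hT2]
      by_cases h : (g i : ℕ) ≠ 0
      · have hcond : ((inc t g j) i : ℕ) ≠ 0 := by rw [inc_apply_ne hji.symm]; exact h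
        rw [if_pos h, if_pos hcond, inc_dec_comm hji]
        congr 1
        simp [wcoef, dec_apply_ne hji]
      · have hcond : ¬ ((inc t g j) i : ℕ) ≠ 0 := by rw [inc_apply_ne hji.symm]; exact h
        rw [if_neg h, if_neg hcond]
    rw [e1, sub_self]
  rw [Finset.sum_congr rfl (fun i _ => key i)]
  have diag : ∀ i, T1 i i - T2 i i
      = single g ((2 * ((g i : ℕ) : ℚ)) - ((t i - 2 : ℕ) : ℚ)) := by
    intro i
    have hlt := (g i).isLt
    have e1 : T1 i i = single g ((((g i : ℕ) * (t i - 1 - (g i : ℕ))) : ℕ) : ℚ) := by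
      simp only [hT1]
      by_cases h : (g i : ℕ) ≠ 0
      · rw [if_pos h, inc_dec_self h]
        congr 1
        rw [show wcoef t (dec t g i) i
            = ((((dec t g i i : ℕ) + 1) * (t i - 2 - (dec t g i i : ℕ)) : ℕ) : ℚ) from rfl]
        rw [dec_apply_self]
        congr 1
        congr 1 <;> omega
      · rw [if_neg h]
        have h0 : (g i : ℕ) = 0 := by simpa using h
        rw [h0]
        simp
    have e2 : T2 i i = single g (((((g i : ℕ) + 1) * (t i - 2 - (g i : ℕ))) : ℕ) : ℚ) := by
      simp only [hT2]
      by_cases h : (g i : ℕ) < t i - 2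
      · have hcond : ((inc t g i) i : ℕ) ≠ 0 := by rw [inc_apply_self]; omega
        rw [if_pos hcond, dec_inc_self h]
        rfl
      · have h2 : t i - 2 - (g i : ℕ) = 0 := by omega
        have hw : wcoef t g i = 0 := by simp [wcoef, h2]
        rw [hw]
        simp [h2]
    rw [e1, e2, ← Finsupp.single_sub]
    congr 1
    exact scalar_id (t i) (g i : ℕ) (by omega)
  rw [Finset.sum_congr rfl (fun i _ => diag i)]
  have hs := map_sum (Finsupp.singleAddHom g)
    (fun i => ((2 * ((g i : ℕ) : ℚ)) - ((t i - 2 : ℕ) : ℚ))) Finset.univ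
  simp only [Finsupp.singleAddHom_apply] at hs
  rw [← hs, show wt t g • (single g 1 : TupMod t) = single g (wt t g) by simp, wt]

end
end Aux
end Chunk3
section Chunk4
namespace Aux
noncomputable section
variable {t : Fin l → ℕ}

lemma wt_eq {g : Tup t} {m : ℕ} (hg : (∑ i, (g i : ℕ)) = m) :
    wt t g = 2 * (m : ℚ) - ((∑ i, (t i - 2) : ℕ) : ℚ) := by
  rw [wt, Finset.sum_sub_distrib, ← hg]
  push_cast
  rw [Finset.mul_sum]

lemma H_span {m : ℕ} {x : TupMod t} (hx : x ∈ TupSpan t m) :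
    raise t (lower t x) - lower t (raise t x)
      = (2 * (m : ℚ) - ((∑ i, (t i - 2) : ℕ) : ℚ)) • x := by
  induction hx using Submodule.span_induction with
  | mem x hx =>
    obtain ⟨g, hg, rfl⟩ := hx
    rw [commutator, wt_eq hg]
  | zero => simp
  | add x y _ _ hx hy =>
    simp only [map_add]
    rw [show raise t (lower t x) + raise t (lower t y)
        - (lower t (raise t x) + lower t (raise t y))
        = (raise t (lower t x) - lower t (raise t x))
          + (raise t (lower t y) - lower t (raise t y)) by abel, hx, hy, smul_add]
  | smul a x _ hx =>
    simp only [map_smul]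
    rw [← smul_sub, hx, smul_comm]

lemma pow_mem_span {m k : ℕ} {v : TupMod t} (hv : v ∈ TupSpan t m) :
    ((raise t) ^ k) v ∈ TupSpan t (m + k) := by
  induction k with
  | zero => simpa using hv
  | succ k ih =>
    rw [show m + (k + 1) = (m + k) + 1 by omega, pow_succ', Module.End.mul_apply]
    exact raise_tupSpan _ ih

lemma chain {m : ℕ} {v : TupMod t} (hv : v ∈ TupSpan t m) (h0 : lower t v = 0) (k : ℕ) :
    lower t (((raise t) ^ (k + 1)) v)
      = (-(((k : ℚ) + 1) * ((2 * (m : ℚ) - ((∑ i, (t i - 2) : ℕ) : ℚ)) + k)))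
          • ((raise t) ^ k) v := by
  set M : ℚ := ((∑ i, (t i - 2) : ℕ) : ℚ) with hM
  set c : ℚ := 2 * (m : ℚ) - M with hc
  induction k with
  | zero =>
    rw [pow_one, pow_zero, Module.End.one_apply]
    have h := H_span hv
    rw [h0, map_zero, zero_sub] at h
    rw [neg_eq_iff_eq_neg.mp h, ← neg_smul]
    congr 1
    simp only [hM, hc]
    push_cast
    ring
  | succ k ih =>
    have hw : ((raise t) ^ (k + 1)) v ∈ TupSpan t (m + (k + 1)) := pow_mem_span hv
    have hH := H_span hw
    have hlow : lower t (((raise t) ^ (k + 1)) v)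
        = (-(((k : ℚ) + 1) * (c + k))) • ((raise t) ^ k) v := ih
    have hstep : lower t (raise t (((raise t) ^ (k + 1)) v))
        = raise t (lower t (((raise t) ^ (k + 1)) v))
          - (2 * ((m + (k + 1) : ℕ) : ℚ) - M) • ((raise t) ^ (k + 1)) v := by
      rw [← hH]; abel
    rw [show ((raise t) ^ (k + 1 + 1)) v = raise t (((raise t) ^ (k + 1)) v) by
      rw [pow_succ', Module.End.mul_apply]]
    rw [hstep, hlow, map_smul]
    rw [show raise t (((raise t) ^ k) v) = ((raise t) ^ (k + 1)) v by
      rw [pow_succ', Module.End.mul_apply]]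
    rw [← sub_smul]
    congr 1
    push_cast
    ring
end
end Aux
end Chunk4
section Chunk5
namespace Aux
noncomputable section
variable {t : Fin l → ℕ}

lemma sum_le_M (g : Tup t) : (∑ i, (g i : ℕ)) ≤ ∑ i, (t i - 2) :=
  Finset.sum_le_sum fun i _ => by have := (g i).isLt; omega

lemma span_bot {j : ℕ} (hj : (∑ i, (t i - 2)) < j) : TupSpan t j = ⊥ := by
  rw [TupSpan, Submodule.span_eq_bot]
  rintro x ⟨f, hf, rfl⟩
  exact absurd (hf ▸ sum_le_M f) (by omega)

lemma lower_inj {m : ℕ} (hm : (∑ i, (t i - 2)) + 1 ≤ 2 * m) :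
    ∀ v ∈ TupSpan t m, lower t v = 0 → v = 0 := by
  intro v hv h0
  have key : ∀ k : ℕ, ((raise t) ^ k) v = 0 → v = 0 := by
    intro k
    induction k with
    | zero => simpa using id
    | succ k ih =>
      intro hk
      have hchain := chain hv h0 k
      rw [hk, map_zero] at hchain
      have hcpos : (0:ℚ) < ((k : ℚ) + 1) * ((2 * (m : ℚ) - ((∑ i, (t i - 2) : ℕ) : ℚ)) + k) := by
        have h1 : ((∑ i, (t i - 2) : ℕ) : ℚ) + 1 ≤ 2 * (m : ℚ) := by exact_mod_cast hm
        have h2 : (0:ℚ) ≤ (k : ℚ) := Nat.cast_nonneg k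
        nlinarith
      have := hchain.symm
      rw [smul_eq_zero] at this
      rcases this with h | h
      · exact absurd h (by intro h'; rw [neg_eq_zero] at h'; linarith)
      · exact ih h
  exact key ((∑ i, (t i - 2)) + 1)
    (by
      have := pow_mem_span (k := (∑ i, (t i - 2)) + 1) hv
      rw [span_bot (by omega)] at this
      simpa using this)

def flipT (t : Fin l → ℕ) (f : Tup t) : Tup t :=
  fun i => ⟨t i - 2 - (f i : ℕ), by have := (f i).isLt; omega⟩

lemma flipT_flipT (f : Tup t) : flipT t (flipT t f) = f := by
  funext i
  apply Fin.ext
  simp only [flipT]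
  have := (f i).isLt
  omega

def flipL (t : Fin l → ℕ) : TupMod t →ₗ[ℚ] TupMod t :=
  Finsupp.lmapDomain ℚ ℚ (flipT t)

lemma flipL_single (g : Tup t) (c : ℚ) : flipL t (single g c) = single (flipT t g) c := by
  simp [flipL, Finsupp.mapDomain_single]

lemma flipL_flipL (x : TupMod t) : flipL t (flipL t x) = x := by
  simp only [flipL, Finsupp.lmapDomain_apply, ← Finsupp.mapDomain_comp]
  rw [show flipT t ∘ flipT t = id from funext flipT_flipT, Finsupp.mapDomain_id]

lemma lower_flipL : (lower t).comp (flipL t) = (flipL t).comp (raise' t) := by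
  apply Finsupp.lhom_ext
  intro g b
  have hb : (single g b : TupMod t) = b • single g 1 := by simp
  rw [hb, map_smul, map_smul]
  congr 1
  simp only [LinearMap.comp_apply]
  rw [flipL_single, lower_single, raise'_single, map_sum]
  rw [show Finset.univ.filter (fun i => ((flipT t g) i : ℕ) ≠ 0)
      = Finset.univ.filter (fun i => (g i : ℕ) < t i - 2) from ?_]
  · refine Finset.sum_congr rfl fun i hi => ?_
    rw [Finset.mem_filter] at hi
    rw [flipL_single]
    congr 1
    funext k
    apply Fin.ext
    by_cases hk : k = i
    · subst hk
      have h1 : ((dec t (flipT t g) k) k : ℕ) = ((flipT t g) k : ℕ) - 1 := dec_apply_self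
      have h2 : ((inc t g k) k : ℕ) = min ((g k : ℕ) + 1) (t k - 2) := inc_apply_self
      simp only [flipT] at *
      rw [h1]
      simp only [flipT, h2]
      omega
    · have h1 : (dec t (flipT t g) i) k = (flipT t g) k := dec_apply_ne hk
      have h2 : (inc t g i) k = g k := inc_apply_ne hk
      rw [h1]
      simp only [flipT, h2]
  · ext i
    simp only [Finset.mem_filter, Finset.mem_univ, true_and, flipT]
    have := (g i).isLt
    constructor
    · intro h; have h' := (Finset.mem_filter.mp h).2; omega
    · intro h; exact Finset.mem_filter.mpr ⟨Finset.mem_univ _, by omega⟩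

lemma flip_span {m : ℕ} : ∀ x ∈ TupSpan t m, flipL t x ∈ TupSpan t ((∑ i, (t i - 2)) - m) := by
  apply map_tupSpan
  intro f hf
  rw [flipL_single]
  apply single_mem_tupSpan
  have h1 : (∑ i, ((flipT t f) i : ℕ)) + ∑ i, (f i : ℕ) = ∑ i, (t i - 2) := by
    rw [← Finset.sum_add_distrib]
    exact Finset.sum_congr rfl fun i _ => by
      simp only [flipT]
      have := (f i).isLt
      omega
  have h2 := sum_le_M f
  omega

lemma raise'_inj {j : ℕ} (hj : 2 * j + 1 ≤ ∑ i, (t i - 2)) :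
    ∀ y ∈ TupSpan t j, raise' t y = 0 → y = 0 := by
  intro y hy h0
  have hv : flipL t y ∈ TupSpan t ((∑ i, (t i - 2)) - j) := flip_span y hy
  have hl : lower t (flipL t y) = 0 := by
    have := congrArg (fun L : TupMod t →ₗ[ℚ] TupMod t => L y) lower_flipL
    simp only [LinearMap.comp_apply] at this
    rw [this, h0, map_zero]
  have := lower_inj (m := (∑ i, (t i - 2)) - j) (by omega) _ hv hl
  have h2 := congrArg (flipL t) this
  rw [flipL_flipL, map_zero] at h2
  exact h2

end
end Aux
end Chunk5
section Chunk6
namespace Aux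
noncomputable section
variable {t : Fin l → ℕ}

instance : FiniteDimensional ℚ (TupMod t) :=
  Module.Finite.equiv (Finsupp.linearEquivFunOnFinite ℚ ℚ (Tup t)).symm

def formL (t : Fin l → ℕ) : TupMod t →ₗ[ℚ] TupMod t →ₗ[ℚ] ℚ :=
  LinearMap.mk₂ ℚ (fun x y => ∑ g : Tup t, x g * y g)
    (fun x x' y => by simp [add_mul, Finset.sum_add_distrib])
    (fun c x y => by simp [Finset.mul_sum, mul_assoc])
    (fun x y y' => by simp [mul_add, Finset.sum_add_distrib])
    (fun c x y => by
      simp only [Finsupp.smul_apply, smul_eq_mul, Finset.mul_sum]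
      exact Finset.sum_congr rfl fun g _ => by ring)

lemma formL_apply (x y : TupMod t) : formL t x y = ∑ g : Tup t, x g * y g := rfl

lemma formL_self_eq_zero {x : TupMod t} (h : formL t x x = 0) : x = 0 := by
  rw [formL_apply] at h
  have := (Finset.sum_eq_zero_iff_of_nonneg
    (fun g _ => mul_self_nonneg (x g))).mp h
  ext g
  have := this g (Finset.mem_univ g)
  have : x g = 0 := by nlinarith
  simpa using this

lemma entry (f g : Tup t) :
    (lower t (single f 1)) g = (raise' t (single g 1)) f := by
  rw [lower_single, raise'_single, Finsupp.finset_sum_apply, Finsupp.finset_sum_apply,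
    Finset.sum_filter, Finset.sum_filter]
  refine Finset.sum_congr rfl fun i _ => ?_
  rw [Finsupp.single_apply, Finsupp.single_apply, ← ite_and, ← ite_and]
  refine if_congr ?_ rfl rfl
  constructor
  · rintro ⟨h1, rfl⟩
    have hlt := (f i).isLt
    refine ⟨?_, inc_dec_self h1⟩
    rw [dec_apply_self]
    omega
  · rintro ⟨h2, rfl⟩
    refine ⟨?_, dec_inc_self h2⟩
    rw [inc_apply_self]
    omega

lemma decomp (x : TupMod t) : x = ∑ f : Tup t, single f (x f) := by
  ext g
  rw [Finsupp.finset_sum_apply]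
  rw [Finset.sum_eq_single g (fun f _ hf => by rw [Finsupp.single_apply, if_neg hf]) (by simp)]
  simp

lemma apply_eq_sum (L : TupMod t →ₗ[ℚ] TupMod t) (x : TupMod t) (g : Tup t) :
    (L x) g = ∑ f : Tup t, x f * (L (single f 1)) g := by
  conv_lhs => rw [decomp x, map_sum, Finsupp.finset_sum_apply]
  refine Finset.sum_congr rfl fun f _ => ?_
  rw [show (single f (x f) : TupMod t) = (x f) • single f 1 by simp, map_smul]
  simp

lemma adjoint (x y : TupMod t) : formL t (lower t x) y = formL t x (raise' t y) := by
  rw [formL_apply, formL_apply]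
  have h1 : ∀ g, (lower t x) g = ∑ f : Tup t, x f * (lower t (single f 1)) g :=
    apply_eq_sum _ x
  have h2 : ∀ f, (raise' t y) f = ∑ g : Tup t, y g * (raise' t (single g 1)) f :=
    apply_eq_sum _ y
  calc ∑ g : Tup t, (lower t x) g * y g
      = ∑ g : Tup t, ∑ f : Tup t, x f * (lower t (single f 1)) g * y g := by
        refine Finset.sum_congr rfl fun g _ => ?_
        rw [h1 g, Finset.sum_mul]
    _ = ∑ f : Tup t, ∑ g : Tup t, x f * (lower t (single f 1)) g * y g := Finset.sum_comm
    _ = ∑ f : Tup t, x f * (raise' t y) f := by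
        refine Finset.sum_congr rfl fun f _ => ?_
        rw [h2 f, Finset.mul_sum]
        refine Finset.sum_congr rfl fun g _ => ?_
        rw [entry f g]
        ring

lemma lower_surj {m : ℕ} (hm1 : 1 ≤ m) (hm : 2 * m ≤ (∑ i, (t i - 2)) + 1) :
    Submodule.map (lower t) (TupSpan t m) = TupSpan t (m - 1) := by
  set U := Submodule.map (lower t) (TupSpan t m) with hU
  have hle : U ≤ TupSpan t (m - 1) := by
    rintro x ⟨v, hv, rfl⟩
    exact lower_tupSpan v hv
  refine Submodule.eq_of_le_of_finrank_le hle ?_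
  set φ : TupMod t →ₗ[ℚ] Module.Dual ℚ ↥U :=
    (LinearMap.lcomp ℚ ℚ U.subtype).comp (formL t).flip with hφ
  have hinj : ∀ y ∈ TupSpan t (m - 1), φ y = 0 → y = 0 := by
    intro y hy h0
    have hz : raise' t y ∈ TupSpan t m := by
      have := raise'_tupSpan y hy
      rwa [show m - 1 + 1 = m by omega] at this
    have hu : lower t (raise' t y) ∈ U := ⟨raise' t y, hz, rfl⟩
    have h1 : formL t (lower t (raise' t y)) y = 0 := by
      have := congrArg (fun ψ : Module.Dual ℚ ↥U => ψ ⟨lower t (raise' t y), hu⟩) h0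
      simpa [hφ, LinearMap.lcomp_apply, formL] using this
    rw [adjoint] at h1
    exact raise'_inj (j := m - 1) (by omega) y hy (formL_self_eq_zero h1)
  have hker : LinearMap.ker (φ.domRestrict (TupSpan t (m - 1))) = ⊥ := by
    rw [LinearMap.ker_eq_bot']
    intro y hy0
    exact Subtype.ext (hinj y.1 y.2 (by simpa [LinearMap.domRestrict_apply] using hy0))
  calc Module.finrank ℚ (TupSpan t (m - 1))
      ≤ Module.finrank ℚ (Module.Dual ℚ ↥U) :=
        LinearMap.finrank_le_finrank_of_injective (LinearMap.ker_eq_bot.mp hker)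
    _ = Module.finrank ℚ ↥U := Subspace.dual_finrank_eq

end
end Aux
end Chunk6
section Chunk7
namespace Aux
noncomputable section
variable {t : Fin l → ℕ}

def Ncard (t : Fin l → ℕ) (m : ℕ) : ℕ :=
  (Finset.univ.filter (fun f : Tup t => (∑ i, (f i : ℕ)) = m)).card

lemma finrank_tupSpan (m : ℕ) : Module.finrank ℚ (TupSpan t m) = Ncard t m := by
  classical
  set b : {f : Tup t // (∑ i, (f i : ℕ)) = m} → TupMod t := fun f => single f.1 1 with hb
  have hli : LinearIndependent ℚ b := by
    have h0 : LinearIndependent ℚ (fun f : Tup t => (single f 1 : TupMod t)) := by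
      have := (Finsupp.basisSingleOne (R := ℚ) (ι := Tup t)).linearIndependent
      simpa [Finsupp.coe_basisSingleOne] using this
    exact h0.comp Subtype.val Subtype.val_injective
  have hspan : TupSpan t m = Submodule.span ℚ (Set.range b) := by
    rw [TupSpan]
    congr 1
    ext x
    constructor
    · rintro ⟨f, hf, rfl⟩; exact ⟨⟨f, hf⟩, rfl⟩
    · rintro ⟨⟨f, hf⟩, rfl⟩; exact ⟨f, hf, rfl⟩
  rw [hspan]
  have hcard := finrank_span_eq_card (R := ℚ) (M := TupMod t) hli
  rw [hcard, Ncard, Fintype.card_subtype]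

set_option synthInstance.maxHeartbeats 400000 in
lemma dim_inf_surj {m : ℕ} (hm1 : 1 ≤ m) (hm : 2 * m ≤ (∑ i, (t i - 2)) + 1) :
    Module.finrank ℚ ↥(TupSpan t m ⊓ LinearMap.ker (lower t)) + Ncard t (m - 1)
      = Ncard t m := by
  have heq : Submodule.comap (TupSpan t m).subtype (LinearMap.ker (lower t))
      = Submodule.comap (TupSpan t m).subtype (TupSpan t m ⊓ LinearMap.ker (lower t)) := by
    ext x
    simp only [Submodule.mem_comap, Submodule.mem_inf]
    exact ⟨fun hx => ⟨x.2, hx⟩, fun hx => hx.2⟩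
  have h := LinearMap.finrank_range_add_finrank_ker ((lower t).domRestrict (TupSpan t m))
  have h1 : LinearMap.range ((lower t).domRestrict (TupSpan t m)) = TupSpan t (m - 1) := by
    rw [LinearMap.range_domRestrict]
    exact lower_surj hm1 hm
  have h2 : LinearMap.ker ((lower t).domRestrict (TupSpan t m))
      = Submodule.comap (TupSpan t m).subtype (TupSpan t m ⊓ LinearMap.ker (lower t)) := by
    rw [LinearMap.ker_domRestrict]
    exact heq
  rw [h1, h2] at h
  have e3 : Module.finrank ℚ (Submodule.comap (TupSpan t m).subtype
      (TupSpan t m ⊓ LinearMap.ker (lower t)))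
      = Module.finrank ℚ ↥(TupSpan t m ⊓ LinearMap.ker (lower t)) :=
    (Submodule.comapSubtypeEquivOfLe inf_le_left).finrank_eq
  rw [e3, finrank_tupSpan (m - 1), finrank_tupSpan m] at h
  omega

lemma span_zero_le_ker : TupSpan t 0 ≤ LinearMap.ker (lower t) := by
  rw [TupSpan, Submodule.span_le]
  rintro x ⟨f, hf, rfl⟩
  have hf0 : ∀ i, (f i : ℕ) = 0 := by
    intro i
    have := Finset.sum_eq_zero_iff.mp hf i (Finset.mem_univ i)
    exact this
  simp only [SetLike.mem_coe, LinearMap.mem_ker]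
  rw [lower_single]
  rw [Finset.filter_false_of_mem (fun i _ => by simp [hf0 i])]
  simp

lemma dim_inf_zero :
    Module.finrank ℚ ↥(TupSpan t 0 ⊓ LinearMap.ker (lower t)) = Ncard t 0 := by
  rw [inf_eq_left.mpr span_zero_le_ker, finrank_tupSpan]

lemma dim_inf_inj {m : ℕ} (hm : (∑ i, (t i - 2)) + 2 ≤ 2 * m) :
    TupSpan t m ⊓ LinearMap.ker (lower t) = ⊥ := by
  rw [Submodule.eq_bot_iff]
  rintro x ⟨hx1, hx2⟩
  exact lower_inj (by omega) x hx1 hx2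

open Polynomial

lemma coeff_P (m : ℕ) :
    (∏ i, ∑ j ∈ Finset.range (t i - 1), (Polynomial.X : ℚ[X]) ^ j).coeff m
      = (Ncard t m : ℚ) := by
  classical
  have h1 : ∀ i : Fin l, (∑ j ∈ Finset.range (t i - 1), (Polynomial.X : ℚ[X]) ^ j)
      = ∑ j : Fin (t i - 1), (X : ℚ[X]) ^ (j : ℕ) :=
    fun i => (Fin.sum_univ_eq_sum_range _ _).symm
  rw [Finset.prod_congr rfl (fun i _ => h1 i), Finset.prod_univ_sum]
  rw [Fintype.piFinset_univ]
  rw [Finset.sum_congr rfl (fun f _ => Finset.prod_pow_eq_pow_sum Finset.univ _ _)]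
  rw [Polynomial.finset_sum_coeff]
  rw [Finset.sum_congr rfl (fun f _ => Polynomial.coeff_X_pow _ _)]
  have h2 : ∀ f : Tup t, (if m = ∑ i, ((f i : ℕ)) then (1:ℚ) else 0)
      = (if (∑ i, ((f i : ℕ))) = m then (1:ℚ) else 0) := fun f => if_congr eq_comm rfl rfl
  rw [Finset.sum_congr rfl fun f _ => h2 f, Finset.sum_boole, Ncard]

end
end Aux
end Chunk7

open Polynomial

/-- `∑_m dim V_{𝐭,prim}^(m) q^m = τ_{< |𝐭|/2 - l + 1} ((1-q) ∏ᵢ (q^(tᵢ-1)-1)/(q-1))`,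
where `τ_{<c}` truncates to terms of degree `< c`, and the factor
`(q^(tᵢ-1)-1)/(q-1)` is written as the geometric sum `∑_{j<tᵢ-1} q^j`.
The truncation condition `m < |𝐭|/2 - l + 1` is stated as `2(m+l) < |𝐭| + 2`. -/
theorem stmt_5 (l d : ℕ) (hl : 1 ≤ l) (t : Fin l → ℕ) (ht : ∀ i, 2 ≤ t i ∧ t i ≤ d) :
    (∑ m ∈ Finset.range ((∑ i, t i) + 1),
        Polynomial.C
          ((Module.finrank ℚ ↥(TupSpan t m ⊓ LinearMap.ker (lower t)) : ℕ) : ℚ)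
          * Polynomial.X ^ m)
      = ∑ m ∈ Finset.range ((∑ i, t i) + 1),
          if 2 * (m + l) < (∑ i, t i) + 2 then
            Polynomial.C
              (((1 - Polynomial.X) *
                  ∏ i, (∑ j ∈ Finset.range (t i - 1), Polynomial.X ^ j) : ℚ[X]).coeff m)
              * Polynomial.X ^ m
          else 0 := by
  classical
  have hsum : (∑ i, t i) = (∑ i, (t i - 2)) + 2 * l := by
    have h : ∀ i : Fin l, t i = (t i - 2) + 2 := fun i => by have := (ht i).1; omega
    rw [Finset.sum_congr rfl fun i _ => h i, Finset.sum_add_distrib]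
    simp [Finset.sum_const, Finset.card_univ, mul_comm]
  refine Finset.sum_congr rfl fun m hm => ?_
  by_cases hc : 2 * (m + l) < (∑ i, t i) + 2
  · rw [if_pos hc]
    have key : ((Module.finrank ℚ ↥(TupSpan t m ⊓ LinearMap.ker (lower t)) : ℕ) : ℚ)
        = (((1 - Polynomial.X) *
            ∏ i, (∑ j ∈ Finset.range (t i - 1), Polynomial.X ^ j) : ℚ[X]).coeff m) := by
      rw [sub_mul, one_mul, Polynomial.coeff_sub]
      cases m with
      | zero =>
        rw [Polynomial.mul_coeff_zero, Polynomial.coeff_X_zero, zero_mul,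
          Aux.dim_inf_zero, Aux.coeff_P]
        simp
      | succ k =>
        rw [Polynomial.coeff_X_mul, Aux.coeff_P, Aux.coeff_P]
        have hms : 2 * (k + 1) ≤ (∑ i, (t i - 2)) + 1 := by omega
        have hdim := Aux.dim_inf_surj (t := t) (m := k + 1) (by omega) hms
        rw [show k + 1 - 1 = k by omega] at hdim
        have hcast : ((Module.finrank ℚ
            ↥(TupSpan t (k + 1) ⊓ LinearMap.ker (lower t)) : ℕ) : ℚ)
            + ((Aux.Ncard t k : ℕ) : ℚ) = ((Aux.Ncard t (k + 1) : ℕ) : ℚ) := by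
          exact_mod_cast congrArg (fun n : ℕ => (n : ℚ)) hdim
        linarith
    rw [key]
  · rw [if_neg hc]
    rw [Aux.dim_inf_inj (by omega)]
    rw [finrank_bot]
    simp
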